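/- Let G and H be groups, G nontrivial and H nontrivial, and let g ∈ G * H lie in the image of G (i.e., g = ι_G(g') for g' ∈ G, g' ≠ 1). Then the centralizer of g in G * H is contained in the image of G, and equals ι_G(Z_G(g')). -/

import Mathlib

open Monoid

namespace CentralizerAux

open Monoid.CoprodI Monoid.CoprodI.Word

variable {ι : Type*} [DecidableEq ι] {M : ι → Type*} [∀ i, Group (M i)]
  [∀ i, DecidableEq (M i)]

/-- Reversal (with letterwise inverses) of a reduced word. -/
def wrev (w : Word M) : Word M where
  toList := (w.toList.map fun l => ⟨l.1, l.2⁻¹⟩).reverse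
  ne_one := by
    intro l hl
    simp only [List.mem_reverse, List.mem_map] at hl
    obtain ⟨a, ha, rfl⟩ := hl
    simpa using w.ne_one a ha
  chain_ne := by
    rw [List.isChain_reverse, List.isChain_map]
    exact List.IsChain.imp (fun a b h => Ne.symm h) w.chain_ne

theorem prod_wrev (w : Word M) : (wrev w).prod = w.prod⁻¹ := by
  show (((w.toList.map fun l => (⟨l.1, l.2⁻¹⟩ : Σ i, M i)).reverse).map
      fun l => of l.2).prod = _
  show _ = ((w.toList.map fun l => of l.2).prod)⁻¹
  induction w.toList with
  | nil => simp
  | cons a l ih =>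
    simp only [List.map_cons, List.reverse_cons, List.map_append, List.prod_append,
      List.prod_cons, List.map_nil, List.prod_nil, mul_one, mul_inv_rev, ih]
    simp

theorem prod_eq_symm (w : Word M) : (Word.equiv (M := M)).symm w = w.prod := rfl

theorem equiv_inv (x : CoprodI M) : Word.equiv x⁻¹ = wrev (Word.equiv x) := by
  rw [Equiv.apply_eq_iff_eq_symm_apply, prod_eq_symm, prod_wrev]
  congr 1
  exact ((Word.equiv).symm_apply_apply x).symm

theorem len_wrev (w : Word M) : (wrev w).toList.length = w.toList.length := by
  simp [wrev]

theorem fstIdx_wrev (w : Word M) :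
    fstIdx (wrev w) = w.toList.getLast?.map Sigma.fst := by
  simp [wrev, fstIdx, List.head?_reverse, List.getLast?_map, Option.map_map]
  rfl

theorem equiv_of_mul {i0 : ι} {d : M i0} (hd : d ≠ 1) (y : CoprodI M)
    (hy : fstIdx (Word.equiv y) ≠ some i0) :
    Word.equiv (of d * y) = cons d (Word.equiv y) hy hd := by
  rw [Equiv.apply_eq_iff_eq_symm_apply, prod_eq_symm, prod_cons]
  congr 1
  exact ((Word.equiv).symm_apply_apply y).symm

theorem equiv_one : Word.equiv (1 : CoprodI M) = empty := by
  rw [Equiv.apply_eq_iff_eq_symm_apply, prod_eq_symm, prod_empty]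

theorem rcons_equivPair (i0 : ι) (w : Word M) :
    rcons (Word.equivPair i0 w) = w := by
  rw [← equivPair_symm]
  exact (Word.equivPair i0).symm_apply_apply w

theorem peel_eq (i0 : ι) (x : CoprodI M) :
    x = of (Word.equivPair i0 (Word.equiv x)).head
      * ((Word.equivPair i0 (Word.equiv x)).tail).prod := by
  conv_lhs => rw [← (Word.equiv).symm_apply_apply x, prod_eq_symm,
    ← rcons_equivPair i0 (Word.equiv x), prod_rcons]

theorem eq_one_of_fstIdx_ne {i0 : ι} {y : CoprodI M} (a : M i0) (hy : y = of a)
    (h : fstIdx (Word.equiv y) ≠ some i0) : y = 1 := by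
  subst hy
  by_cases ha : a = 1
  · simp [ha]
  · exfalso
    have h1 : fstIdx (Word.equiv (1 : CoprodI M)) ≠ some i0 := by
      rw [equiv_one]; simp [fstIdx, empty]
    have := equiv_of_mul ha 1 h1
    rw [mul_one] at this
    rw [this] at h
    simp at h

theorem key (i0 : ι) : ∀ (n : ℕ) (x : CoprodI M) (b c : M i0), b ≠ 1 → c ≠ 1 →
    x * of c = of b * x → (Word.equiv x).toList.length ≤ n → ∃ a : M i0, x = of a := by
  intro n
  induction n with
  | zero =>
    intro x b c _ _ _ hlen
    refine ⟨1, ?_⟩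
    have hx : Word.equiv x = empty := by
      apply Word.ext
      simpa using List.length_eq_zero_iff.mp (Nat.le_zero.mp hlen)
    rw [map_one, ← (Word.equiv).symm_apply_apply x, hx, prod_eq_symm, prod_empty]
  | succ n ih =>
    intro x b c hb hc hcomm hlen
    have peel : ∀ (x : CoprodI M) (b c : M i0), b ≠ 1 → c ≠ 1 → x * of c = of b * x →
        (Word.equiv x).toList.length ≤ n + 1 →
        (Word.equivPair i0 (Word.equiv x)).head ≠ 1 → ∃ a : M i0, x = of a := by
      intro x b c hb hc hcomm hlen hph
      set p := Word.equivPair i0 (Word.equiv x) with hp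
      have hxeq : x = of p.head * p.tail.prod := peel_eq i0 x
      set y := p.tail.prod with hy
      have hyw : Word.equiv y = p.tail := (Word.equiv).apply_symm_apply p.tail
      have hcy : y * of c = of (p.head⁻¹ * b * p.head) * y := by
        apply mul_left_cancel (a := of p.head)
        calc of p.head * (y * of c) = (of p.head * y) * of c := by rw [mul_assoc]
          _ = of b * (of p.head * y) := by rw [← hxeq, hcomm]
          _ = of p.head * (of (p.head⁻¹ * b * p.head) * y) := by
              simp only [map_mul, map_inv]
              group
              try rfl
      have hb' : p.head⁻¹ * b * p.head ≠ 1 := by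
        intro h
        apply hb
        have := congrArg (fun z => p.head * z * p.head⁻¹) h
        simpa [mul_assoc] using this
      have hlen' : (Word.equiv y).toList.length ≤ n := by
        have hr : rcons p = Word.equiv x := rcons_equivPair i0 (Word.equiv x)
        have hL : (Word.equiv x).toList.length = p.tail.toList.length + 1 := by
          rw [← hr, rcons, dif_neg hph]
          simp [cons]
        rw [hyw]
        omega
      obtain ⟨a, ha⟩ := ih y (p.head⁻¹ * b * p.head) c hb' hc hcy hlen'
      have hy1 : y = 1 := eq_one_of_fstIdx_ne a ha (by rw [hyw]; exact p.fstIdx_ne)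
      exact ⟨p.head, by rw [hxeq, hy1, mul_one]⟩
    by_cases hnil : (Word.equiv x).toList = []
    · refine ⟨1, ?_⟩
      have hx : Word.equiv x = empty := Word.ext (by simpa using hnil)
      rw [map_one, ← (Word.equiv).symm_apply_apply x, hx, prod_eq_symm, prod_empty]
    by_cases hph : (Word.equivPair i0 (Word.equiv x)).head ≠ 1
    · exact peel x b c hb hc hcomm hlen hph
    push_neg at hph
    have hfst : fstIdx (Word.equiv x) ≠ some i0 := by
      rw [← rcons_equivPair i0 (Word.equiv x), rcons, dif_pos hph]
      exact (Word.equivPair i0 (Word.equiv x)).fstIdx_ne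
    have hcomm' : x⁻¹ * of b = of c * x⁻¹ := by
      have h := congrArg (fun z => x⁻¹ * z * x⁻¹) hcomm
      simp only [mul_assoc, mul_inv_cancel, mul_one, inv_mul_cancel_left] at h
      rw [h]
    have hlenInv : (Word.equiv x⁻¹).toList.length ≤ n + 1 := by
      rw [equiv_inv, len_wrev]; exact hlen
    by_cases hph' : (Word.equivPair i0 (Word.equiv x⁻¹)).head ≠ 1
    · obtain ⟨a, ha⟩ := peel x⁻¹ c b hc hb hcomm' hlenInv hph'
      refine ⟨a⁻¹, ?_⟩
      rw [← inv_inv x, ha, map_inv]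
    push_neg at hph'
    exfalso
    have hfst' : fstIdx (Word.equiv x⁻¹) ≠ some i0 := by
      rw [← rcons_equivPair i0 (Word.equiv x⁻¹), rcons, dif_pos hph']
      exact (Word.equivPair i0 (Word.equiv x⁻¹)).fstIdx_ne
    have hA : Word.equiv (of b * x) = cons b (Word.equiv x) hfst hb :=
      equiv_of_mul hb x hfst
    have hB : Word.equiv (of c⁻¹ * x⁻¹)
        = cons c⁻¹ (Word.equiv x⁻¹) hfst' (inv_ne_one.mpr hc) :=
      equiv_of_mul (inv_ne_one.mpr hc) x⁻¹ hfst'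
    have hzeq : (of b * x)⁻¹ = of c⁻¹ * x⁻¹ := by
      rw [← hcomm, mul_inv_rev, map_inv]
    have h1 : fstIdx (Word.equiv ((of b * x)⁻¹)) = some i0 := by
      rw [hzeq, hB]; simp
    apply absurd h1
    rw [equiv_inv, hA, fstIdx_wrev]
    obtain ⟨hd, tl, htl⟩ := List.exists_cons_of_ne_nil hnil
    have hgl : ((cons b (Word.equiv x) hfst hb).toList).getLast?
        = (Word.equiv x).toList.getLast? := by
      simp only [Word.cons, htl]
      rw [List.getLast?_cons_cons]
    rw [hgl, ← fstIdx_wrev, ← equiv_inv]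
    exact hfst'

end CentralizerAux

/-- The centralizer in `G ∗ H` of a nontrivial element of the free factor `G` is contained in the
image of `G`, and equals the image of the centralizer taken in `G`. -/
theorem centralizer_of_mem_factor
    (G H : Type*) [Group G] [Group H] [Nontrivial G] [Nontrivial H]
    (g' : G) (hg : g' ≠ 1) :
    Subgroup.centralizer {(Coprod.inl g' : Monoid.Coprod G H)} ≤
        (Coprod.inl : G →* Monoid.Coprod G H).range ∧
      Subgroup.centralizer {(Coprod.inl g' : Monoid.Coprod G H)} =
        Subgroup.map (Coprod.inl : G →* Monoid.Coprod G H) (Subgroup.centralizer {g'}) := by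
  classical
  letI F : Bool → Type _ := fun b =>
    cond b (↥(Coprod.inl : G →* Monoid.Coprod G H).range)
      (↥(Coprod.inr : H →* Monoid.Coprod G H).range)
  letI : ∀ b, Group (F b) := fun b =>
    Bool.rec (motive := fun b => Group (F b))
      (inferInstance : Group ↥(Coprod.inr : H →* Monoid.Coprod G H).range)
      (inferInstance : Group ↥(Coprod.inl : G →* Monoid.Coprod G H).range) b
  letI : ∀ b, DecidableEq (F b) := fun b => Classical.decEq _
  let e : Monoid.Coprod G H →* Monoid.CoprodI F :=
    Coprod.lift
      ((Monoid.CoprodI.of (i := true)).comp (Coprod.inl : G →* Monoid.Coprod G H).rangeRestrict)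
      ((Monoid.CoprodI.of (i := false)).comp (Coprod.inr : H →* Monoid.Coprod G H).rangeRestrict)
  let e' : Monoid.CoprodI F →* Monoid.Coprod G H :=
    Monoid.CoprodI.lift (fun b =>
      Bool.rec (motive := fun b => F b →* Monoid.Coprod G H)
        (Coprod.inr : H →* Monoid.Coprod G H).range.subtype
        (Coprod.inl : G →* Monoid.Coprod G H).range.subtype b)
  have he'e : ∀ x, e' (e x) = x := by
    intro x
    have : e'.comp e = MonoidHom.id _ := by
      apply Coprod.hom_ext <;> ext m <;>
        simp [e, e', Coprod.lift_apply_inl, Coprod.lift_apply_inr, Monoid.CoprodI.lift_of] <;>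
        rfl
    calc e' (e x) = (e'.comp e) x := rfl
      _ = x := by rw [this]; rfl
  have key1 : ∀ x : Monoid.Coprod G H,
      x ∈ Subgroup.centralizer {(Coprod.inl g' : Monoid.Coprod G H)} →
      ∃ a : G, x = Coprod.inl a := by
    intro x hx
    rw [Subgroup.mem_centralizer_singleton_iff] at hx
    set b : F true := (Coprod.inl : G →* Monoid.Coprod G H).rangeRestrict g' with hbdef
    have hb : b ≠ 1 := by
      intro h
      apply hg
      have h1 : (Coprod.inl g' : Monoid.Coprod G H) = 1 := congrArg Subtype.val h
      have h2 : (Coprod.inl g' : Monoid.Coprod G H) = Coprod.inl 1 := by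
        rw [map_one]; exact h1
      exact Coprod.inl_injective h2
    have h1 : e (Coprod.inl g') = Monoid.CoprodI.of (i := true) b :=
      Coprod.lift_apply_inl _ _ _
    have hxe : e x * Monoid.CoprodI.of (i := true) b
        = Monoid.CoprodI.of (i := true) b * e x := by
      calc e x * Monoid.CoprodI.of (i := true) b = e x * e (Coprod.inl g') := by rw [h1]
        _ = e (x * Coprod.inl g') := by rw [map_mul]
        _ = e (Coprod.inl g' * x) := by rw [← hx]
        _ = Monoid.CoprodI.of (i := true) b * e x := by rw [map_mul, h1]
    let hword := @Monoid.CoprodI.Word.equiv Bool F _ instDecidableEqBool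
      (fun b => Classical.decEq (F b))
    obtain ⟨a, ha⟩ := @CentralizerAux.key Bool instDecidableEqBool F _
      (fun b => Classical.decEq (F b)) true
      (hword (e x)).toList.length (e x) b b hb hb hxe (le_refl _)
    let a' : ↥(Coprod.inl : G →* Monoid.Coprod G H).range := a
    obtain ⟨a0, ha0⟩ := a'.2
    refine ⟨a0, ?_⟩
    have hxa := congrArg e' ha
    rw [he'e] at hxa
    have hval : e' (Monoid.CoprodI.of (i := true) a) = (a' : Monoid.Coprod G H) := by
      simp only [e', Monoid.CoprodI.lift_of]
      rfl
    rw [hxa, hval, ← ha0]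
  constructor
  · intro x hx
    obtain ⟨a, rfl⟩ := key1 x hx
    exact ⟨a, rfl⟩
  · apply le_antisymm
    · intro x hx
      obtain ⟨a, rfl⟩ := key1 x hx
      rw [Subgroup.mem_centralizer_singleton_iff] at hx
      rw [← map_mul, ← map_mul] at hx
      have hcomm : g' * a = a * g' := Coprod.inl_injective hx.symm
      exact ⟨a, Subgroup.mem_centralizer_singleton_iff.mpr hcomm.symm, rfl⟩
    · rintro x ⟨a, ha, rfl⟩
      rw [SetLike.mem_coe] at ha
      rw [Subgroup.mem_centralizer_singleton_iff] at ha ⊢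
      rw [← map_mul, ← map_mul, ha]
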